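/- Let φ : (0,∞) → (0,∞) be continuous, strictly increasing with φ(0⁺)=0, φ(1)=1, φ(∞)=∞, let μ be a nonzero finite Borel measure on S^{n-1} not concentrated on any closed hemisphere, and let (M_i) be convex bodies with the origin in their interiors such that the sequence ∫_{S^{n-1}} φ(h_{M_i}) dμ is bounded. Then the sequence (M_i) is uniformly bounded, i.e. sup_i max_{u∈S^{n-1}} ρ_{M_i}(u) < ∞. -/

import Mathlib

open MeasureTheory Metric Filter Set ENNReal

noncomputable section

abbrev E (n : ℕ) := EuclideanSpace ℝ (Fin n)

abbrev Sph (n : ℕ) := ↥(Metric.sphere (0 : E n) 1)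

/-- Convex body in `ℝⁿ` with the origin in its interior. -/
def IsBody {n : ℕ} (K : Set (E n)) : Prop :=
  IsCompact K ∧ Convex ℝ K ∧ 0 ∈ interior K

/-- Support function of a set. -/
def supportFn {n : ℕ} (K : Set (E n)) (u : E n) : ℝ :=
  sSup ((fun x => (inner ℝ x u : ℝ)) '' K)

/-- Polar body. -/
def polarBody {n : ℕ} (K : Set (E n)) : Set (E n) :=
  {y | ∀ x ∈ K, (inner ℝ x y : ℝ) ≤ 1}

/-- Radial function. -/
def radialFn {n : ℕ} (K : Set (E n)) (u : E n) : ℝ :=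
  sSup {r : ℝ | 0 ≤ r ∧ r • u ∈ K}

/-- Volume of the unit ball in `ℝⁿ`. -/
def unitBallVol (n : ℕ) : ℝ≥0∞ := volume (Metric.closedBall (0 : E n) 1)

section Aux

variable {n : ℕ} {K : Set (E n)}

lemma aux_bddAbove (hK : IsCompact K) (v : E n) :
    BddAbove ((fun x => (inner ℝ x v : ℝ)) '' K) :=
  (hK.image (continuous_id.inner continuous_const)).bddAbove

lemma le_supportFn (hK : IsCompact K) {x : E n} (hx : x ∈ K) (v : E n) :
    (inner ℝ x v : ℝ) ≤ supportFn K v :=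
  le_csSup (aux_bddAbove hK v) (mem_image_of_mem _ hx)

lemma supportFn_le (hne : K.Nonempty) {v : E n} {c : ℝ}
    (h : ∀ x ∈ K, (inner ℝ x v : ℝ) ≤ c) : supportFn K v ≤ c :=
  csSup_le (hne.image _) (by rintro y ⟨x, hx, rfl⟩; exact h x hx)

lemma supportFn_sub_le (hK : IsCompact K) (hne : K.Nonempty) {D : ℝ}
    (hD : ∀ x ∈ K, ‖x‖ ≤ D) (v w : E n) :
    supportFn K v ≤ supportFn K w + D * ‖v - w‖ := by
  apply supportFn_le hne
  intro x hx
  have h1 : (inner ℝ x (v - w) : ℝ) = inner ℝ x v - (inner ℝ x w : ℝ) := inner_sub_right x v w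
  have h2 : (inner ℝ x (v - w) : ℝ) ≤ ‖x‖ * ‖v - w‖ := real_inner_le_norm x (v - w)
  have h3 := le_supportFn hK hx w
  have h4 : ‖x‖ * ‖v - w‖ ≤ D * ‖v - w‖ :=
    mul_le_mul_of_nonneg_right (hD x hx) (norm_nonneg _)
  linarith

lemma supportFn_continuous (hK : IsCompact K) (hne : K.Nonempty) :
    Continuous (supportFn K) := by
  obtain ⟨D, hD⟩ := hK.isBounded.exists_norm_le
  have hD0 : 0 ≤ D := le_trans (norm_nonneg _) (hD _ hne.choose_spec)
  apply (LipschitzWith.of_dist_le_mul (K := ⟨D, hD0⟩) ?_).continuous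
  intro v w
  rw [Real.dist_eq, abs_sub_le_iff, dist_eq_norm]
  change _ ≤ D * _ ∧ _ ≤ D * _
  constructor
  · have := supportFn_sub_le hK hne hD v w; linarith
  · have := supportFn_sub_le hK hne hD w v
    rw [norm_sub_rev] at this; linarith

lemma supportFn_pos_of_body (hK : IsBody K) :
    ∃ ε > (0:ℝ), ∀ v : E n, ‖v‖ = 1 → ε ≤ supportFn K v := by
  obtain ⟨hc, -, hint⟩ := hK
  obtain ⟨ε, hε, hb⟩ := Metric.mem_nhds_iff.mp (mem_interior_iff_mem_nhds.mp hint)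
  refine ⟨ε / 2, by linarith, fun v hv => ?_⟩
  have hmem : (ε / 2) • v ∈ K := by
    apply hb
    simp [mem_ball, dist_eq_norm, norm_smul, hv, abs_div, abs_of_pos hε]
    linarith
  have := le_supportFn hc hmem v
  rwa [real_inner_smul_left, real_inner_self_eq_norm_sq, hv, one_pow, mul_one] at this

lemma cap_measure_lower_bound {n : ℕ} (μ : Measure (Sph n)) [IsFiniteMeasure μ]
    (hμ : μ ≠ 0) [Nonempty (Sph n)]
    (hconc : ∀ v : Sph n, 0 < ∫ u : Sph n, max (inner ℝ (u : E n) (v : E n) : ℝ) 0 ∂μ) :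
    ∃ δ > (0:ℝ), ∃ m > (0:ℝ), ∀ v : Sph n,
      m ≤ (μ {u : Sph n | δ ≤ (inner ℝ (u : E n) (v : E n) : ℝ)}).toReal := by
  have hnorm : ∀ u : Sph n, ‖(u : E n)‖ = 1 := fun u => by
    have := u.2; rwa [mem_sphere_iff_norm, sub_zero] at this
  have hintegrable : ∀ v : Sph n,
      Integrable (fun u : Sph n => max (inner ℝ (u : E n) (v : E n) : ℝ) 0) μ := by
    intro v
    rw [← integrableOn_univ]
    exact (((continuous_subtype_val.inner continuous_const).max
      continuous_const).continuousOn).integrableOn_compact isCompact_univ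
  set G : Sph n → ℝ := fun v => ∫ u : Sph n, max (inner ℝ (u : E n) (v : E n) : ℝ) 0 ∂μ with hG
  have hGlip : ∀ v w : Sph n, G v - G w ≤ (μ univ).toReal * dist v w := by
    intro v w
    have hsub : G v - G w = ∫ u : Sph n,
        (max (inner ℝ (u : E n) (v : E n) : ℝ) 0 - max (inner ℝ (u : E n) (w : E n) : ℝ) 0) ∂μ :=
      (integral_sub (hintegrable v) (hintegrable w)).symm
    rw [hsub]
    calc ∫ u : Sph n, (max (inner ℝ (u : E n) (v : E n) : ℝ) 0
            - max (inner ℝ (u : E n) (w : E n) : ℝ) 0) ∂μ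
        ≤ ∫ _u : Sph n, dist v w ∂μ := by
          apply integral_mono ((hintegrable v).sub (hintegrable w)) (integrable_const _)
          intro u
          have h1 : |max (inner ℝ (u : E n) (v : E n) : ℝ) 0
              - max (inner ℝ (u : E n) (w : E n) : ℝ) 0|
              ≤ |(inner ℝ (u : E n) (v : E n) : ℝ) - inner ℝ (u : E n) (w : E n)| :=
            abs_max_sub_max_le_abs _ _ _
          have h2 : (inner ℝ (u : E n) (v : E n) : ℝ) - inner ℝ (u : E n) (w : E n)
              = inner ℝ (u : E n) ((v : E n) - (w : E n)) := (inner_sub_right _ _ _).symm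
          have h3 : |(inner ℝ (u : E n) ((v : E n) - (w : E n)) : ℝ)|
              ≤ ‖(u : E n)‖ * ‖(v : E n) - (w : E n)‖ := abs_real_inner_le_norm _ _
          rw [hnorm u, one_mul] at h3
          have h4 : dist v w = ‖(v : E n) - (w : E n)‖ := by
            rw [Subtype.dist_eq, dist_eq_norm]
          have h5 := (abs_le.mp (h1.trans (h2 ▸ h3))).2
          simp only [Pi.sub_apply]
          linarith
      _ = (μ univ).toReal * dist v w := by simp [integral_const, mul_comm, Measure.real]
  have hGcont : Continuous G := by
    apply (LipschitzWith.of_dist_le_mul (K := (μ univ).toReal.toNNReal) ?_).continuous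
    intro v w
    rw [Real.dist_eq, abs_sub_le_iff, Real.coe_toNNReal _ ENNReal.toReal_nonneg]
    exact ⟨hGlip v w, by simpa [dist_comm] using hGlip w v⟩
  obtain ⟨v₀, -, hv₀⟩ := isCompact_univ.exists_isMinOn univ_nonempty hGcont.continuousOn
  set c : ℝ := G v₀ with hc
  have hcpos : 0 < c := hconc v₀
  have hμT : 0 < (μ univ).toReal :=
    ENNReal.toReal_pos (by simpa using hμ) (measure_ne_top μ _)
  set δ : ℝ := c / (2 * (μ univ).toReal) with hδ
  have hδpos : 0 < δ := div_pos hcpos (by linarith)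
  refine ⟨δ, hδpos, c / 2, by linarith, fun v => ?_⟩
  set A : Set (Sph n) := {u : Sph n | δ ≤ (inner ℝ (u : E n) (v : E n) : ℝ)} with hA
  have hAmeas : MeasurableSet A := by
    have : IsClosed A :=
      isClosed_le continuous_const (continuous_subtype_val.inner continuous_const)
    exact this.measurableSet
  have hbound : ∀ u : Sph n, max (inner ℝ (u : E n) (v : E n) : ℝ) 0
      ≤ δ + A.indicator (fun _ => (1:ℝ)) u := by
    intro u
    by_cases hu : u ∈ A
    · rw [indicator_of_mem hu]
      have h3 : (inner ℝ (u : E n) (v : E n) : ℝ) ≤ 1 := by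
        have := real_inner_le_norm (u : E n) (v : E n)
        rwa [hnorm u, hnorm v, one_mul] at this
      simp only [max_le_iff]
      constructor <;> linarith
    · rw [indicator_of_notMem hu, add_zero]
      rw [hA, mem_setOf_eq, not_le] at hu
      simp only [max_le_iff]
      constructor <;> linarith
  have hint2 : ∫ u : Sph n, (δ + A.indicator (fun _ => (1:ℝ)) u) ∂μ
      = δ * (μ univ).toReal + (μ A).toReal := by
    rw [integral_add (integrable_const _) ((integrable_const _).indicator hAmeas),
      integral_const, integral_indicator_const _ hAmeas]
    simp [mul_comm, Measure.real]
  have hle : G v ≤ δ * (μ univ).toReal + (μ A).toReal := by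
    rw [← hint2]
    exact integral_mono (hintegrable v)
      ((integrable_const _).add ((integrable_const _).indicator hAmeas)) hbound
  have hcv : c ≤ G v := hv₀ (mem_univ v)
  have hδμ : δ * (μ univ).toReal = c / 2 := by
    rw [hδ]; field_simp
  linarith

end Aux

theorem bounded_orlicz_integral_implies_bounded {n : ℕ}
    (φ : ℝ → ℝ) (hφc : ContinuousOn φ (Ioi 0)) (hφmono : StrictMonoOn φ (Ioi 0))
    (hφpos : ∀ t ∈ Ioi (0 : ℝ), 0 < φ t)
    (hφ0 : Tendsto φ (nhdsWithin 0 (Ioi 0)) (nhds 0))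
    (hφ1 : φ 1 = 1) (hφtop : Tendsto φ atTop atTop)
    (μ : Measure (Sph n)) [IsFiniteMeasure μ] (hμ : μ ≠ 0)
    (hconc : ∀ v : Sph n, 0 < ∫ u : Sph n, max (inner ℝ (u : E n) (v : E n) : ℝ) 0 ∂μ)
    (M : ℕ → Set (E n)) (hM : ∀ i, IsBody (M i))
    (hbd : ∃ C : ℝ, ∀ i, ∫ u : Sph n, φ (supportFn (M i) (u : E n)) ∂μ ≤ C) :
    ∃ R : ℝ, ∀ i, ∀ u : Sph n, radialFn (M i) (u : E n) ≤ R := by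
  obtain ⟨C, hC⟩ := hbd
  rcases isEmpty_or_nonempty (Sph n) with hemp | hne
  · exact absurd (by ext s; simp [eq_empty_of_isEmpty s]) hμ
  obtain ⟨δ, hδpos, m, hmpos, hcap⟩ := cap_measure_lower_bound μ hμ hconc
  set B : ℝ := (|C| + 1) / m with hB
  have hBpos : 0 < B := div_pos (by positivity) hmpos
  obtain ⟨t, htB, ht1⟩ := ((hφtop.eventually_ge_atTop B).and (eventually_ge_atTop 1)).exists
  refine ⟨t / δ, fun i u₀ => ?_⟩
  by_contra hlt
  push_neg at hlt
  obtain ⟨hKc, hKconv, hKint⟩ := hM i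
  have h0K : (0 : E n) ∈ M i := interior_subset hKint
  have hSne : (0:ℝ) ∈ {r : ℝ | 0 ≤ r ∧ r • (u₀ : E n) ∈ M i} :=
    ⟨le_refl 0, by simpa using h0K⟩
  obtain ⟨r, hrS, hrR⟩ := exists_lt_of_lt_csSup ⟨0, hSne⟩ hlt
  obtain ⟨hr0, hrmem⟩ := hrS
  have hrδ : t < r * δ := (div_lt_iff₀ hδpos).mp hrR
  have hnorm : ∀ v : Sph n, ‖(v : E n)‖ = 1 := fun v => by
    have := v.2; rwa [mem_sphere_iff_norm, sub_zero] at this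
  obtain ⟨ε, hεpos, hεle⟩ := supportFn_pos_of_body (hM i)
  have hpos : ∀ v : Sph n, 0 < supportFn (M i) (v : E n) :=
    fun v => lt_of_lt_of_le hεpos (hεle _ (hnorm v))
  have ht0 : (0:ℝ) < t := by linarith
  set A : Set (Sph n) := {v : Sph n | δ ≤ (inner ℝ (v : E n) (u₀ : E n) : ℝ)} with hA
  have hAmeas : MeasurableSet A := by
    have : IsClosed A :=
      isClosed_le continuous_const (continuous_subtype_val.inner continuous_const)
    exact this.measurableSet
  have hμA : m ≤ (μ A).toReal := hcap u₀
  have hconts : Continuous (fun v : Sph n => φ (supportFn (M i) (v : E n))) := by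
    apply hφc.comp_continuous
      ((supportFn_continuous hKc ⟨0, h0K⟩).comp continuous_subtype_val)
    exact fun v => hpos v
  have hint : Integrable (fun v : Sph n => φ (supportFn (M i) (v : E n))) μ := by
    rw [← integrableOn_univ]
    exact hconts.continuousOn.integrableOn_compact isCompact_univ
  have hlow : ∀ v : Sph n, A.indicator (fun _ => φ t) v ≤ φ (supportFn (M i) (v : E n)) := by
    intro v
    by_cases hv : v ∈ A
    · rw [indicator_of_mem hv]
      have hvδ : δ ≤ (inner ℝ (v : E n) (u₀ : E n) : ℝ) := hv
      have hsupp : r * δ ≤ supportFn (M i) (v : E n) := by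
        have h1 := le_supportFn hKc hrmem (v : E n)
        rw [real_inner_smul_left] at h1
        have h2 : (inner ℝ (u₀ : E n) (v : E n) : ℝ) = inner ℝ (v : E n) (u₀ : E n) :=
          real_inner_comm _ _
        rw [h2] at h1
        have h3 : r * δ ≤ r * (inner ℝ (v : E n) (u₀ : E n) : ℝ) :=
          mul_le_mul_of_nonneg_left hvδ hr0
        linarith
      have htlt : t < supportFn (M i) (v : E n) := lt_of_lt_of_le hrδ hsupp
      exact le_of_lt (hφmono (mem_Ioi.mpr ht0) (mem_Ioi.mpr (ht0.trans htlt)) htlt)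
    · rw [indicator_of_notMem hv]
      exact le_of_lt (hφpos _ (hpos v))
  have hmono := integral_mono ((integrable_const (φ t)).indicator hAmeas) hint hlow
  rw [integral_indicator_const _ hAmeas, smul_eq_mul, measureReal_def] at hmono
  have hφt0 : 0 < φ t := lt_of_lt_of_le hBpos htB
  have hmul : m * B ≤ (μ A).toReal * φ t :=
    mul_le_mul hμA htB (le_of_lt hBpos) (le_trans (le_of_lt hmpos) hμA)
  have hmB : m * B = |C| + 1 := by
    rw [hB, mul_comm, div_mul_cancel₀ _ (ne_of_gt hmpos)]
  have := hC i
  have habs := le_abs_self C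
  linarith
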